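/- For a single shelf shuffle of a deck of n cards labeled 1 to n (cards drawn from the bottom of the deck, each placed on top or bottom of the pile independently with probability 1/2), the probability that card i lands in position j equals (C(i-1, j-1) + C(i-1, n-j)) / 2^i, for all 1 ≤ i, j ≤ n, with the convention C(0,0)=1 and C(0,k)=0 for k ≥ 1. -/

import Mathlib

/-- The pile after `k` cards of a deck of `n` cards have been placed. Cards are
drawn from the bottom of the ordered deck, i.e. in order `n, n-1, …, 1`;
`f c = true` means card `c` is placed on top of the pile, `f c = false` at the
bottom. Position `j` of the shuffled deck is entry `j-1` of the final list. -/
def shelfPile (n : ℕ) (f : ℕ → Bool) : ℕ → List ℕ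
  | 0 => []
  | k + 1 => if f (n - k) then (n - k) :: shelfPile n f k else shelfPile n f k ++ [n - k]

lemma shelfPile_length (n : ℕ) (f : ℕ → Bool) (k : ℕ) : (shelfPile n f k).length = k := by
  induction k with
  | zero => rfl
  | succ k ih =>
    unfold shelfPile
    split <;> simp [ih]

lemma shelfPile_mem (n : ℕ) (f : ℕ → Bool) (k : ℕ) (hk : k ≤ n) :
    ∀ x ∈ shelfPile n f k, n - k < x := by
  induction k with
  | zero => simp [shelfPile]
  | succ k ih =>
    intro x hx
    unfold shelfPile at hx
    have h1 : n - (k+1) < n - k := by omega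
    split at hx
    · rcases List.mem_cons.mp hx with h | h
      · omega
      · exact lt_trans h1 (ih (by omega) x h)
    · rcases List.mem_append.mp hx with h | h
      · exact lt_trans h1 (ih (by omega) x h)
      · simp at h; omega

lemma shelfPile_get (n i : ℕ) (g : ℕ → Bool) (hi1 : 1 ≤ i) (hin : i ≤ n) :
    ∀ k, n - i < k → k ≤ n → ∀ m,
      ((shelfPile n g k)[m]? = some i ↔
        m = (if g i = true then ((Finset.Ioo (n-k) i).filter (fun c => g c = true)).card
            else k - 1 - ((Finset.Ioo (n-k) i).filter (fun c => g c = false)).card)) := by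
  intro k
  induction k with
  | zero => intro h; omega
  | succ k ih =>
    intro hk1 hk2 m
    by_cases hbase : k = n - i
    · -- base case: card i is placed at this step
      have hni : n - k = i := by omega
      have hempty : Finset.Ioo (n-(k+1)) i = ∅ := by
        apply Finset.eq_empty_of_forall_notMem
        intro c hc
        simp only [Finset.mem_Ioo] at hc
        omega
      have hP : (shelfPile n g k).length = k := shelfPile_length n g k
      have hPmem : ∀ x ∈ shelfPile n g k, i < x := by
        intro x hx
        have := shelfPile_mem n g k (by omega) x hx
        omega
      rw [hempty]
      unfold shelfPile
      rw [hni]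
      simp only [Finset.filter_empty, Finset.card_empty]
      by_cases hgi : g i = true
      · rw [if_pos hgi, if_pos hgi]
        rcases m with _ | m
        · simp
        · rw [List.getElem?_cons_succ]
          constructor
          · intro h
            exact absurd (hPmem _ (List.mem_of_getElem? h)) (lt_irrefl i)
          · omega
      · rw [if_neg hgi, if_neg hgi]
        rcases lt_trichotomy m k with h | h | h
        · rw [List.getElem?_append, if_pos (by omega)]
          constructor
          · intro hh
            exact absurd (hPmem _ (List.mem_of_getElem? hh)) (lt_irrefl i)
          · omega
        · have hcat := List.getElem?_concat_length (l := shelfPile n g k) (a := i)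
          rw [hP] at hcat
          rw [h, hcat]
          simp
        · rw [List.getElem?_eq_none (by simp [hP]; omega)]
          constructor
          · intro hh; exact absurd hh (by simp)
          · omega
    · -- inductive step: card n - k < i placed on an existing pile containing i
      have hc0 : 1 ≤ n - k ∧ n - k < i := by omega
      have hIoo : Finset.Ioo (n-(k+1)) i = insert (n-k) (Finset.Ioo (n-k) i) := by
        ext c
        simp only [Finset.mem_Ioo, Finset.mem_insert]
        omega
      have hcardT := Finset.card_filter_le (Finset.Ioo (n-k) i) (fun c => g c = true)
      have hcardB := Finset.card_filter_le (Finset.Ioo (n-k) i) (fun c => g c = false)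
      rw [Nat.card_Ioo] at hcardT hcardB
      have ih' := ih (by omega) (by omega)
      have hP : (shelfPile n g k).length = k := shelfPile_length n g k
      unfold shelfPile
      rw [hIoo]
      by_cases hg0 : g (n-k) = true
      · rw [if_pos hg0]
        have hT : ((insert (n-k) (Finset.Ioo (n-k) i)).filter (fun c => g c = true)).card
            = ((Finset.Ioo (n-k) i).filter (fun c => g c = true)).card + 1 := by
          rw [Finset.filter_insert, if_pos hg0, Finset.card_insert_of_notMem (by simp)]
        have hB : ((insert (n-k) (Finset.Ioo (n-k) i)).filter (fun c => g c = false)).card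
            = ((Finset.Ioo (n-k) i).filter (fun c => g c = false)).card := by
          rw [Finset.filter_insert, if_neg (by simp [hg0])]
        rw [hT, hB]
        rcases m with _ | m
        · rw [List.getElem?_cons_zero]
          constructor
          · intro hh
            have : (n-k) = i := Option.some.inj hh
            omega
          · intro hh
            exfalso
            by_cases hgi : g i = true
            · rw [if_pos hgi] at hh; omega
            · rw [if_neg hgi] at hh; omega
        · rw [List.getElem?_cons_succ, ih' m]
          by_cases hgi : g i = true
          · rw [if_pos hgi, if_pos hgi]; omega
          · rw [if_neg hgi, if_neg hgi]; omega
      · rw [if_neg hg0]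
        have hT : ((insert (n-k) (Finset.Ioo (n-k) i)).filter (fun c => g c = true)).card
            = ((Finset.Ioo (n-k) i).filter (fun c => g c = true)).card := by
          rw [Finset.filter_insert, if_neg hg0]
        have hB : ((insert (n-k) (Finset.Ioo (n-k) i)).filter (fun c => g c = false)).card
            = ((Finset.Ioo (n-k) i).filter (fun c => g c = false)).card + 1 := by
          rw [Finset.filter_insert, if_pos (by simp [hg0]), Finset.card_insert_of_notMem (by simp)]
        rw [hT, hB]
        rcases lt_trichotomy m k with h | h | h
        · rw [List.getElem?_append, if_pos (by omega), ih' m]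
          split_ifs <;> omega
        · have hcat := List.getElem?_concat_length (l := shelfPile n g k) (a := n-k)
          rw [hP] at hcat
          rw [h, hcat]
          constructor
          · intro hh
            have : (n-k) = i := Option.some.inj hh
            omega
          · intro hh
            exfalso
            by_cases hgi : g i = true
            · rw [if_pos hgi] at hh; omega
            · rw [if_neg hgi] at hh; omega
        · rw [List.getElem?_eq_none (by simp [hP]; omega)]
          constructor
          · intro hh; exact absurd hh (by simp)
          · intro hh
            exfalso
            by_cases hgi : g i = true
            · rw [if_pos hgi] at hh; omega
            · rw [if_neg hgi] at hh; omega

open Finset in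
lemma set_count (α : Type*) [Fintype α] [DecidableEq α] (q : α → Prop) [DecidablePred q]
    (p : α) (hpq : ¬ q p) (t : ℕ) :
    ((univ : Finset (Finset α)).filter (fun s => p ∈ s ∧ (s.filter q).card = t)).card
      = (univ.filter q).card.choose t
          * 2 ^ (Fintype.card α - (univ.filter q).card - 1) := by
  classical
  set A : Finset α := univ.filter q with hA
  set R : Finset α := (univ.filter (fun x => ¬ q x)).erase p with hR
  have hpmem : p ∈ univ.filter (fun x => ¬ q x) := by simp [hpq]
  have hRcard : R.card = Fintype.card α - A.card - 1 := by
    rw [hR, card_erase_of_mem hpmem, hA]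
    have := Finset.card_filter_add_card_filter_not (s := (univ : Finset α)) (p := q)
    rw [card_univ] at this
    omega
  rw [← hRcard, ← Finset.card_powerset, ← Finset.card_powersetCard t A,
    ← Finset.card_product]
  refine Finset.card_bij' (fun s _ => (s.filter q, (s.filter (fun x => ¬ q x)).erase p))
    (fun uv _ => uv.1 ∪ uv.2 ∪ {p}) ?_ ?_ ?_ ?_
  · -- maps into product
    intro s hs
    simp only [mem_filter, mem_univ, true_and] at hs
    simp only [mem_product, mem_powersetCard, mem_powerset]
    refine ⟨⟨?_, hs.2⟩, ?_⟩
    · intro x hx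
      rw [hA, mem_filter]
      simp only [mem_filter] at hx
      exact ⟨mem_univ x, hx.2⟩
    · intro x hx
      rw [hR, mem_erase, mem_filter]
      simp only [mem_erase, mem_filter] at hx
      exact ⟨hx.1, mem_univ x, hx.2.2⟩
  · -- maps back
    intro uv huv
    simp only [mem_product, mem_powersetCard, mem_powerset] at huv
    obtain ⟨⟨hu, hucard⟩, hv⟩ := huv
    have hqu : ∀ x ∈ uv.1, q x := by
      intro x hx; have := hu hx; simp [hA] at this; exact this
    have hqv : ∀ x ∈ uv.2, x ≠ p ∧ ¬ q x := by
      intro x hx; have := hv hx; simp [hR] at this; exact this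
    have hfu : (uv.1 ∪ uv.2 ∪ {p}).filter q = uv.1 := by
      ext x
      simp only [mem_filter, mem_union, mem_singleton]
      constructor
      · rintro ⟨(h | h) | h, hq⟩
        · exact h
        · exact absurd hq (hqv x h).2
        · subst h; exact absurd hq hpq
      · intro h; exact ⟨Or.inl (Or.inl h), hqu x h⟩
    simp only [mem_filter, mem_univ, true_and]
    refine ⟨by simp, by rw [hfu, hucard]⟩
  · -- left inverse
    intro s hs
    simp only [mem_filter, mem_univ, true_and] at hs
    ext x
    simp only [mem_union, mem_erase, mem_filter, mem_singleton]
    constructor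
    · rintro ((⟨h, _⟩ | ⟨_, h, _⟩) | h)
      · exact h
      · exact h
      · subst h; exact hs.1
    · intro hx
      by_cases hxp : x = p
      · exact Or.inr hxp
      · by_cases hq : q x
        · exact Or.inl (Or.inl ⟨hx, hq⟩)
        · exact Or.inl (Or.inr ⟨hxp, hx, hq⟩)
  · -- right inverse
    intro uv huv
    simp only [mem_product, mem_powersetCard, mem_powerset] at huv
    obtain ⟨⟨hu, hucard⟩, hv⟩ := huv
    have hqu : ∀ x ∈ uv.1, q x := by
      intro x hx; have := hu hx; simp [hA] at this; exact this
    have hqv : ∀ x ∈ uv.2, x ≠ p ∧ ¬ q x := by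
      intro x hx; have := hv hx; simp [hR] at this; exact this
    have hfu : (uv.1 ∪ uv.2 ∪ {p}).filter q = uv.1 := by
      ext x
      simp only [mem_filter, mem_union, mem_singleton]
      constructor
      · rintro ⟨(h | h) | h, hq⟩
        · exact h
        · exact absurd hq (hqv x h).2
        · subst h; exact absurd hq hpq
      · intro h; exact ⟨Or.inl (Or.inl h), hqu x h⟩
    have hfv : ((uv.1 ∪ uv.2 ∪ {p}).filter (fun x => ¬ q x)).erase p = uv.2 := by
      ext x
      simp only [mem_erase, mem_filter, mem_union, mem_singleton]
      constructor
      · rintro ⟨hxp, (h | h) | h, hq⟩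
        · exact absurd (hqu x h) hq
        · exact h
        · exact absurd h hxp
      · intro h
        exact ⟨(hqv x h).1, Or.inl (Or.inr h), (hqv x h).2⟩
    rw [Prod.ext_iff]
    exact ⟨hfu, hfv⟩

open Finset in
lemma count_main (α : Type*) [Fintype α] [DecidableEq α] (q : α → Prop) [DecidablePred q]
    (p : α) (hpq : ¬ q p) (b : Bool) (t : ℕ) :
    ((univ : Finset (α → Bool)).filter (fun f =>
        f p = b ∧ (univ.filter (fun x => q x ∧ f x = b)).card = t)).card
      = (univ.filter q).card.choose t
          * 2 ^ (Fintype.card α - (univ.filter q).card - 1) := by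
  classical
  rw [← set_count α q p hpq t]
  refine Finset.card_bij' (fun f _ => univ.filter (fun x => f x = b))
    (fun s _ => (fun x => if x ∈ s then b else !b)) ?_ ?_ ?_ ?_
  · intro f hf
    simp only [mem_filter, mem_univ, true_and] at hf ⊢
    have hkey : (univ.filter (fun x => f x = b)).filter q
        = univ.filter (fun x => q x ∧ f x = b) := by
      ext x; simp only [mem_filter, mem_univ, true_and]; tauto
    exact ⟨by simp [hf.1], by rw [hkey]; exact hf.2⟩
  · intro s hs
    simp only [mem_filter, mem_univ, true_and] at hs ⊢
    constructor
    · simp [hs.1]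
    · have hkey : univ.filter (fun x => q x ∧ (if x ∈ s then b else !b) = b)
          = s.filter q := by
        ext x
        simp only [mem_filter, mem_univ, true_and]
        by_cases hx : x ∈ s <;> simp [hx] <;> tauto
      rw [hkey]; exact hs.2
  · intro f _
    funext x
    simp only [mem_filter, mem_univ, true_and]
    by_cases h : f x = b
    · simp [h]
    · simp only [h, if_false]
      cases b <;> cases hfx : f x <;> simp_all
  · intro s _
    ext x
    simp only [mem_filter, mem_univ, true_and]
    by_cases hx : x ∈ s <;> simp [hx]

/-- For a single (fair) shelf shuffle of `n` cards, where each card is placed on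
top or at the bottom of the pile independently with probability `1/2`, the
probability that card `i` lands in position `j` equals
`(C(i-1,j-1) + C(i-1,n-j))/2^i`. -/
theorem shelf_position_matrix (n i j : ℕ) (hi1 : 1 ≤ i) (hin : i ≤ n)
    (hj1 : 1 ≤ j) (hjn : j ≤ n) :
    ((Finset.univ.filter (fun f : Fin n → Bool =>
        (shelfPile n (fun c => if h : c - 1 < n then f ⟨c - 1, h⟩ else false) n)[j - 1]?
          = some i)).card : ℝ) / 2 ^ n
      = ((Nat.choose (i - 1) (j - 1) : ℝ) + Nat.choose (i - 1) (n - j)) / 2 ^ i := by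
  classical
  have hn1 : 1 ≤ n := le_trans hi1 hin
  have hiltn : i - 1 < n := by omega
  set pi : Fin n := ⟨i - 1, hiltn⟩ with hpi
  -- the card-count of the region {x | x.val < i - 1}
  have hAcard : ((Finset.univ : Finset (Fin n)).filter (fun x => x.val < i - 1)).card
      = i - 1 := by
    conv_rhs => rw [← Finset.card_range (i-1)]
    apply Finset.card_bij (fun x _ => x.val)
    · intro a ha
      simp only [Finset.mem_filter] at ha
      simp [Finset.mem_range, ha.2]
    · intro a₁ _ a₂ _ h
      exact Fin.val_injective h
    · intro y hy
      simp only [Finset.mem_range] at hy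
      exact ⟨⟨y, by omega⟩, by simp [hy], rfl⟩
  -- bridge from ℕ-level counts to Fin-level counts
  have hbridge : ∀ (f : Fin n → Bool) (b : Bool),
      ((Finset.Ioo 0 i).filter (fun c =>
          (fun c => if h : c - 1 < n then f ⟨c - 1, h⟩ else false) c = b)).card
        = (Finset.univ.filter (fun x : Fin n => x.val < i - 1 ∧ f x = b)).card := by
    intro f b
    apply Finset.card_bij (fun c hc => (⟨c - 1, by
      simp only [Finset.mem_filter, Finset.mem_Ioo] at hc; omega⟩ : Fin n))
    · intro c hc
      simp only [Finset.mem_filter, Finset.mem_Ioo] at hc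
      obtain ⟨⟨hc0, hci⟩, hcb⟩ := hc
      rw [dif_pos (by omega : c - 1 < n)] at hcb
      simp only [Finset.mem_filter, Finset.mem_univ, true_and]
      exact ⟨by omega, hcb⟩
    · intro c₁ h₁ c₂ h₂ h
      simp only [Finset.mem_filter, Finset.mem_Ioo] at h₁ h₂
      have := congrArg Fin.val h
      simp only at this
      omega
    · intro x hx
      simp only [Finset.mem_filter, Finset.mem_univ, true_and] at hx
      refine ⟨x.val + 1, ?_, ?_⟩
      · simp only [Finset.mem_filter, Finset.mem_Ioo]
        refine ⟨⟨by omega, by omega⟩, ?_⟩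
        rw [dif_pos (by omega : x.val + 1 - 1 < n)]
        have : (⟨x.val + 1 - 1, by omega⟩ : Fin n) = x := by
          apply Fin.ext; simp
        rw [this]
        exact hx.2
      · apply Fin.ext; simp
  -- rewrite the condition
  have hcond : ∀ f : Fin n → Bool,
      ((shelfPile n (fun c => if h : c - 1 < n then f ⟨c - 1, h⟩ else false) n)[j - 1]?
          = some i)
        ↔ ((f pi = true ∧
              (Finset.univ.filter (fun x : Fin n => x.val < i - 1 ∧ f x = true)).card = j - 1)
          ∨ (f pi = false ∧
              (Finset.univ.filter (fun x : Fin n => x.val < i - 1 ∧ f x = false)).card = n - j)) := by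
    intro f
    set g : ℕ → Bool := fun c => if h : c - 1 < n then f ⟨c - 1, h⟩ else false with hg
    have hgi : g i = f pi := by
      rw [hg]
      simp only
      rw [dif_pos hiltn]
    rw [shelfPile_get n i g hi1 hin n (by omega) le_rfl (j-1)]
    have h0 : n - n = 0 := by omega
    rw [h0]
    have hTb := hbridge f true
    have hBb := hbridge f false
    have hBle : (Finset.univ.filter (fun x : Fin n => x.val < i - 1 ∧ f x = false)).card
        ≤ i - 1 := by
      conv_rhs => rw [← hAcard]
      apply Finset.card_le_card
      intro x hx
      simp only [Finset.mem_filter] at hx ⊢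
      exact ⟨hx.1, hx.2.1⟩
    rw [hgi] at *
    by_cases hf : f pi = true
    · rw [if_pos hf, hTb]
      simp [hf]
      omega
    · rw [if_neg hf, hBb]
      have hf' : f pi = false := by simp at hf; exact hf
      simp [hf']
      omega
  have hPQ : (Finset.univ.filter (fun f : Fin n → Bool =>
      (shelfPile n (fun c => if h : c - 1 < n then f ⟨c - 1, h⟩ else false) n)[j - 1]?
        = some i))
      = Finset.univ.filter (fun f : Fin n → Bool =>
          (f pi = true ∧
              (Finset.univ.filter (fun x : Fin n => x.val < i - 1 ∧ f x = true)).card = j - 1)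
          ∨ (f pi = false ∧
              (Finset.univ.filter (fun x : Fin n => x.val < i - 1 ∧ f x = false)).card = n - j)) := by
    apply Finset.filter_congr
    intro f _
    exact hcond f
  rw [hPQ]
  rw [Finset.filter_or, Finset.card_union_of_disjoint (by
    rw [Finset.disjoint_left]
    intro f hf hf'
    simp only [Finset.mem_filter] at hf hf'
    rw [hf.2.1] at hf'
    exact absurd hf'.2.1 (by simp))]
  have hpq : ¬ (pi.val < i - 1) := by show ¬ (i - 1 < i - 1); omega
  have h1 := count_main (Fin n) (fun x => x.val < i - 1) pi hpq true (j - 1)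
  have h2 := count_main (Fin n) (fun x => x.val < i - 1) pi hpq false (n - j)
  rw [hAcard, Fintype.card_fin] at h1 h2
  rw [h1, h2]
  clear h1 h2
  have hexp : n - (i - 1) - 1 = n - i := by omega
  rw [hexp]
  have h2n : (2:ℝ)^n = 2^(n-i) * 2^i := by
    rw [← pow_add]
    congr 1
    omega
  push_cast
  rw [h2n]
  have hne : (2:ℝ)^(n-i) ≠ 0 := by positivity
  have hne2 : (2:ℝ)^i ≠ 0 := by positivity
  field_simp
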